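/- arXiv:1508.00690 — 2 statements merged into one kernel-verified Lean document; each statement's English description precedes it below -/
import Mathlib

section
/- Let F be a field, B ≤ M(n,F), A = B ⊗ M(d,F) the d-th blow-up, and A ∈ A. Consider the second Wong sequence W₀ = 0, W_i = A(A^{-1}(W_{i-1})). Then each W_i is invariant under all I_n ⊗ Y for Y ∈ M(d,F); hence each W_i has the form W_i = V_i ⊗ F^d for some V_i ≤ F^n, and in particular dim(W_i) is divisible by d for every i. -/
open Matrix Module Kronecker

/-- The second Wong sequence of `(A, 𝓐)` for matrices indexed by `ι`. -/
def wongSeq {F ι : Type*} [Field F] [Fintype ι] [DecidableEq ι]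
    (𝓐 : Submodule F (Matrix ι ι F)) (A : Matrix ι ι F) :
    ℕ → Submodule F (ι → F)
  | 0 => ⊥
  | i + 1 => Submodule.span F
      {w : ι → F | ∃ B ∈ 𝓐, ∃ v : ι → F,
        A.mulVec v ∈ wongSeq 𝓐 A i ∧ w = B.mulVec v}

section Aux

variable {F : Type*} [Field F] {n d : ℕ}

/-- Componentwise formula for `(1 ⊗ₖ Y) *ᵥ w`. -/
lemma kron_mulVec_eq (Y : Matrix (Fin d) (Fin d) F) (w : Fin n × Fin d → F)
    (p : Fin n × Fin d) :
    ((1 : Matrix (Fin n) (Fin n) F) ⊗ₖ Y).mulVec w p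
      = ∑ j, Y p.2 j * w (p.1, j) := by
  simp [mulVec, dotProduct, Fintype.sum_prod_type, one_apply, ite_mul,
    Finset.sum_ite_eq]

/-- A blow-up is closed under left multiplication by `1 ⊗ₖ Y`. -/
lemma closure_mul (𝓑 : Submodule F (Matrix (Fin n) (Fin n) F))
    (𝓐 : Submodule F (Matrix (Fin n × Fin d) (Fin n × Fin d) F))
    (h𝓐 : 𝓐 = Submodule.span F
      {M : Matrix (Fin n × Fin d) (Fin n × Fin d) F |
        ∃ B ∈ 𝓑, ∃ C : Matrix (Fin d) (Fin d) F, M = B ⊗ₖ C})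
    (Y : Matrix (Fin d) (Fin d) F) {B : Matrix (Fin n × Fin d) (Fin n × Fin d) F}
    (hB : B ∈ 𝓐) :
    ((1 : Matrix (Fin n) (Fin n) F) ⊗ₖ Y) * B ∈ 𝓐 := by
  subst h𝓐
  induction hB using Submodule.span_induction with
  | mem x hx =>
    obtain ⟨B', hB', C, rfl⟩ := hx
    refine Submodule.subset_span ⟨B', hB', Y * C, ?_⟩
    rw [← Matrix.mul_kronecker_mul, Matrix.one_mul]
  | zero => simp
  | add x y _ _ hx hy => rw [Matrix.mul_add]; exact Submodule.add_mem _ hx hy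
  | smul c x _ hx => rw [Matrix.mul_smul]; exact Submodule.smul_mem _ c hx

/-- If `𝓐` is closed under left multiplication by `M`, then each term of the
second Wong sequence is invariant under `M *ᵥ ·`. -/
lemma wong_invariant {ι : Type*} [Fintype ι] [DecidableEq ι]
    (𝓐 : Submodule F (Matrix ι ι F)) (A : Matrix ι ι F)
    (M : Matrix ι ι F) (hM : ∀ B ∈ 𝓐, M * B ∈ 𝓐) (i : ℕ) :
    ∀ v ∈ wongSeq 𝓐 A i, M.mulVec v ∈ wongSeq 𝓐 A i := by
  intro v hv
  cases i with
  | zero =>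
    simp only [wongSeq, Submodule.mem_bot] at hv ⊢
    rw [hv, Matrix.mulVec_zero]
  | succ i =>
    simp only [wongSeq] at hv ⊢
    induction hv using Submodule.span_induction with
    | mem x hx =>
      obtain ⟨B, hB, u, hu, rfl⟩ := hx
      exact Submodule.subset_span ⟨M * B, hM B hB, u, hu, Matrix.mulVec_mulVec ..⟩
    | zero => rw [Matrix.mulVec_zero]; exact Submodule.zero_mem _
    | add x y _ _ hx hy => rw [Matrix.mulVec_add]; exact Submodule.add_mem _ hx hy
    | smul c x _ hx => rw [Matrix.mulVec_smul]; exact Submodule.smul_mem _ c hx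

/-- The "column space" of a subspace of `F^n ⊗ F^d`. -/
def colSp (W : Submodule F (Fin n × Fin d → F)) : Submodule F (Fin n → F) :=
  Submodule.span F {u | ∃ w ∈ W, ∃ k : Fin d, u = fun i => w (i, k)}

/-- A subspace invariant under all `1 ⊗ₖ Y` is of the form `V ⊗ F^d`. -/
lemma structure_lemma (W : Submodule F (Fin n × Fin d → F))
    (hW : ∀ Y : Matrix (Fin d) (Fin d) F, ∀ v ∈ W,
      ((1 : Matrix (Fin n) (Fin n) F) ⊗ₖ Y).mulVec v ∈ W) :
    W = Submodule.span F
      {v : Fin n × Fin d → F | ∃ u ∈ colSp W, ∃ e : Fin d → F, v = fun p => u p.1 * e p.2} := by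
  apply le_antisymm
  · intro w hw
    have hdecomp : w = ∑ k : Fin d,
        (fun p : Fin n × Fin d => w (p.1, k) * (Pi.single k 1 : Fin d → F) p.2) := by
      funext p
      rw [Finset.sum_apply]
      rw [Finset.sum_eq_single p.2]
      · simp
      · intro b _ hb; simp [Pi.single_apply, (Ne.symm hb)]
      · simp
    rw [hdecomp]
    refine Submodule.sum_mem _ fun k _ => Submodule.subset_span ?_
    exact ⟨fun i => w (i, k), Submodule.subset_span ⟨w, hw, k, rfl⟩, Pi.single k 1, rfl⟩
  · rw [Submodule.span_le]
    rintro v ⟨u, hu, e, rfl⟩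
    induction hu using Submodule.span_induction with
    | mem x hx =>
      obtain ⟨w, hw, k, rfl⟩ := hx
      have key : (fun p : Fin n × Fin d => w (p.1, k) * e p.2)
          = ((1 : Matrix (Fin n) (Fin n) F) ⊗ₖ
              (Matrix.of fun j j' => e j * if j' = k then 1 else 0)).mulVec w := by
        funext p
        rw [kron_mulVec_eq]
        simp [mul_assoc, mul_ite, ite_mul, Finset.mul_sum, mul_comm]
      rw [key]
      exact hW _ w hw
    | zero =>
      have : (fun p : Fin n × Fin d => (0 : Fin n → F) p.1 * e p.2) = 0 := by
        funext p; simp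
      rw [this]; exact Submodule.zero_mem W
    | add x y _ _ hx hy =>
      have : (fun p : Fin n × Fin d => (x + y) p.1 * e p.2)
          = (fun p : Fin n × Fin d => x p.1 * e p.2) + fun p => y p.1 * e p.2 := by
        funext p; simp [add_mul]
      rw [this]; exact Submodule.add_mem _ hx hy
    | smul c x _ hx =>
      have : (fun p : Fin n × Fin d => (c • x) p.1 * e p.2)
          = c • fun p : Fin n × Fin d => x p.1 * e p.2 := by
        funext p; simp [mul_assoc]
      rw [this]; exact Submodule.smul_mem _ c hx

/-- Such a subspace is isomorphic to `d` copies of its column space. -/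
noncomputable def wEquiv (W : Submodule F (Fin n × Fin d → F))
    (hW : ∀ Y : Matrix (Fin d) (Fin d) F, ∀ v ∈ W,
      ((1 : Matrix (Fin n) (Fin n) F) ⊗ₖ Y).mulVec v ∈ W) :
    W ≃ₗ[F] (Fin d → colSp W) where
  toFun w := fun k => ⟨fun i => w.1 (i, k), Submodule.subset_span ⟨w.1, w.2, k, rfl⟩⟩
  invFun f := ⟨fun p => (f p.2).1 p.1, by
    have hdecomp : (fun p : Fin n × Fin d => (f p.2).1 p.1)
        = ∑ k : Fin d, (fun p : Fin n × Fin d =>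
            (f k).1 p.1 * (Pi.single k 1 : Fin d → F) p.2) := by
      funext p
      rw [Finset.sum_apply, Finset.sum_eq_single p.2]
      · simp
      · intro b _ hb; simp [Pi.single_apply, (Ne.symm hb)]
      · simp
    rw [hdecomp]
    refine Submodule.sum_mem _ fun k _ => ?_
    exact (structure_lemma W hW).ge
      (Submodule.subset_span ⟨(f k).1, (f k).2, Pi.single k 1, rfl⟩)⟩
  map_add' w₁ w₂ := by ext k i; rfl
  map_smul' c w := by ext k i; rfl
  left_inv w := by ext p; rfl
  right_inv f := by ext k i; rfl

lemma dim_dvd (W : Submodule F (Fin n × Fin d → F))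
    (hW : ∀ Y : Matrix (Fin d) (Fin d) F, ∀ v ∈ W,
      ((1 : Matrix (Fin n) (Fin n) F) ⊗ₖ Y).mulVec v ∈ W) :
    d ∣ Module.finrank F W := by
  rw [(wEquiv W hW).finrank_eq, Module.finrank_pi_fintype]
  simp only [Finset.sum_const, Finset.card_univ, Fintype.card_fin, smul_eq_mul]
  exact Dvd.intro _ rfl

end Aux

/-- For a blow-up `𝓐 = 𝓑 ⊗ M(d,F)` and `A ∈ 𝓐`, every term `W_i` of the
second Wong sequence is invariant under all `I ⊗ Y`, is of the form
`V_i ⊗ F^d`, and has dimension divisible by `d`. -/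
theorem stmt16 {F : Type*} [Field F] {n d : ℕ} (hd : 0 < d)
    (𝓑 : Submodule F (Matrix (Fin n) (Fin n) F))
    (𝓐 : Submodule F (Matrix (Fin n × Fin d) (Fin n × Fin d) F))
    (h𝓐 : 𝓐 = Submodule.span F
      {M : Matrix (Fin n × Fin d) (Fin n × Fin d) F |
        ∃ B ∈ 𝓑, ∃ C : Matrix (Fin d) (Fin d) F, M = B ⊗ₖ C})
    (A : Matrix (Fin n × Fin d) (Fin n × Fin d) F) (hA : A ∈ 𝓐) :
    ∀ i : ℕ,
      (∀ Y : Matrix (Fin d) (Fin d) F, ∀ v ∈ wongSeq 𝓐 A i,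
        ((1 : Matrix (Fin n) (Fin n) F) ⊗ₖ Y).mulVec v ∈ wongSeq 𝓐 A i) ∧
      (∃ V : Submodule F (Fin n → F),
        wongSeq 𝓐 A i = Submodule.span F
          {v : Fin n × Fin d → F | ∃ u ∈ V, ∃ e : Fin d → F, v = fun p => u p.1 * e p.2}) ∧
      d ∣ finrank F (wongSeq 𝓐 A i) := by
  intro i
  have hinv : ∀ Y : Matrix (Fin d) (Fin d) F, ∀ v ∈ wongSeq 𝓐 A i,
      ((1 : Matrix (Fin n) (Fin n) F) ⊗ₖ Y).mulVec v ∈ wongSeq 𝓐 A i :=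
    fun Y => wong_invariant 𝓐 A _ (fun B hB => closure_mul 𝓑 𝓐 h𝓐 Y hB) i
  exact ⟨hinv, ⟨colSp _, structure_lemma _ hinv⟩, dim_dvd _ hinv⟩
end

section
/- Let F be a field, B ≤ M(n,F), A = B ⊗ M(d,F), and A ∈ A with rk(A) = rd. Then the second Wong sequence of (A, A) stabilizes to its limit in at most r + 1 steps: W_{r+1} = W_{r+2} = ⋯. -/
open Matrix Module Kronecker

namespace WongAux

variable {F : Type*} [Field F]

section general

variable {ι : Type*} [Fintype ι] [DecidableEq ι]
  (𝓐 : Submodule F (Matrix ι ι F)) (A : Matrix ι ι F)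

lemma wongSeq_succ (i : ℕ) : wongSeq 𝓐 A (i + 1) = Submodule.span F
    {w : ι → F | ∃ B ∈ 𝓐, ∃ v : ι → F,
      A.mulVec v ∈ wongSeq 𝓐 A i ∧ w = B.mulVec v} := rfl

lemma wongSeq_le_succ (i : ℕ) : wongSeq 𝓐 A i ≤ wongSeq 𝓐 A (i + 1) := by
  induction i with
  | zero => exact bot_le
  | succ i ih =>
      rw [wongSeq_succ, wongSeq_succ]
      refine Submodule.span_mono ?_
      rintro w ⟨B, hB, v, hv, rfl⟩
      exact ⟨B, hB, v, ih hv, rfl⟩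

lemma wongSeq_stab {i : ℕ} (h : wongSeq 𝓐 A i = wongSeq 𝓐 A (i + 1)) :
    ∀ k, wongSeq 𝓐 A (i + k) = wongSeq 𝓐 A i := by
  intro k
  induction k with
  | zero => rfl
  | succ k ih =>
      have h2 : wongSeq 𝓐 A (i + k + 1) = wongSeq 𝓐 A (i + 1) := by
        rw [wongSeq_succ, wongSeq_succ, ih]
      rw [show i + (k+1) = i + k + 1 from rfl, h2, ← h]

end general

section blowup

variable {n d : ℕ}
  (𝓐 : Submodule F (Matrix (Fin n × Fin d) (Fin n × Fin d) F))
  (A : Matrix (Fin n × Fin d) (Fin n × Fin d) F)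

/-- `K j = span {(1 ⊗ C) v : A v ∈ W j}`. -/
def Kseq (j : ℕ) : Submodule F (Fin n × Fin d → F) :=
  Submodule.span F {w | ∃ C : Matrix (Fin d) (Fin d) F, ∃ v,
    A.mulVec v ∈ wongSeq 𝓐 A j ∧ w = ((1 : Matrix (Fin n) (Fin n) F) ⊗ₖ C).mulVec v}

/-- `𝓐 · K`. -/
def appSp (K : Submodule F (Fin n × Fin d → F)) : Submodule F (Fin n × Fin d → F) :=
  Submodule.span F {x | ∃ B ∈ 𝓐, ∃ w ∈ K, x = B.mulVec w}

variable {𝓑 : Submodule F (Matrix (Fin n) (Fin n) F)}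

variable {𝓐} in
lemma right_mul_mem
    (h𝓐 : 𝓐 = Submodule.span F
      {M : Matrix (Fin n × Fin d) (Fin n × Fin d) F |
        ∃ B ∈ 𝓑, ∃ C : Matrix (Fin d) (Fin d) F, M = B ⊗ₖ C})
    {B : Matrix (Fin n × Fin d) (Fin n × Fin d) F} (hB : B ∈ 𝓐)
    (C : Matrix (Fin d) (Fin d) F) : B * ((1 : Matrix (Fin n) (Fin n) F) ⊗ₖ C) ∈ 𝓐 := by
  have hle : Submodule.map (LinearMap.mulRight F ((1 : Matrix (Fin n) (Fin n) F) ⊗ₖ C)) 𝓐 ≤ 𝓐 := by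
    conv_lhs => rw [h𝓐]
    rw [Submodule.map_span]
    refine Submodule.span_le.mpr ?_
    rintro x ⟨M, ⟨B', hB', C', rfl⟩, rfl⟩
    have h2 : (LinearMap.mulRight F ((1 : Matrix (Fin n) (Fin n) F) ⊗ₖ C)) (B' ⊗ₖ C')
        = B' ⊗ₖ (C' * C) := by
      rw [LinearMap.mulRight_apply, ← mul_kronecker_mul, Matrix.mul_one]
    rw [h2, h𝓐]
    exact Submodule.subset_span ⟨B', hB', C' * C, rfl⟩
  exact hle ⟨B, hB, rfl⟩

variable {𝓐} in
/-- The crucial identity : `W (j+1) = 𝓐 · (K j)`. -/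
lemma wongSeq_succ_eq_appSp
    (h𝓐 : 𝓐 = Submodule.span F
      {M : Matrix (Fin n × Fin d) (Fin n × Fin d) F |
        ∃ B ∈ 𝓑, ∃ C : Matrix (Fin d) (Fin d) F, M = B ⊗ₖ C})
    (j : ℕ) : wongSeq 𝓐 A (j + 1) = appSp 𝓐 (Kseq 𝓐 A j) := by
  apply le_antisymm
  · rw [wongSeq_succ, appSp]
    refine Submodule.span_le.mpr ?_
    rintro x ⟨B, hB, v, hv, rfl⟩
    refine Submodule.subset_span ⟨B, hB, v, ?_, rfl⟩
    refine Submodule.subset_span ⟨1, v, hv, ?_⟩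
    rw [Matrix.one_kronecker_one, Matrix.one_mulVec]
  · rw [appSp]
    refine Submodule.span_le.mpr ?_
    rintro x ⟨B, hB, w, hw, rfl⟩
    -- B.mulVec maps Kseq into wongSeq (j+1)
    have key : Kseq 𝓐 A j ≤ (wongSeq 𝓐 A (j+1)).comap B.mulVecLin := by
      rw [Kseq]
      refine Submodule.span_le.mpr ?_
      rintro y ⟨C, v, hv, rfl⟩
      simp only [SetLike.mem_coe, Submodule.mem_comap, mulVecLin_apply]
      rw [Matrix.mulVec_mulVec]
      rw [wongSeq_succ]
      exact Submodule.subset_span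
        ⟨B * ((1 : Matrix (Fin n) (Fin n) F) ⊗ₖ C), right_mul_mem h𝓐 hB C, v, hv, rfl⟩
    simpa using key hw

lemma Kseq_mono (j : ℕ) : Kseq 𝓐 A j ≤ Kseq 𝓐 A (j + 1) := by
  refine Submodule.span_mono ?_
  rintro w ⟨C, v, hv, rfl⟩
  exact ⟨C, v, wongSeq_le_succ 𝓐 A j hv, rfl⟩

lemma Kseq_invariant (j : ℕ) (C : Matrix (Fin d) (Fin d) F) :
    ∀ v ∈ Kseq 𝓐 A j, ((1 : Matrix (Fin n) (Fin n) F) ⊗ₖ C).mulVec v ∈ Kseq 𝓐 A j := by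
  intro v hv
  have key : Kseq 𝓐 A j ≤
      (Kseq 𝓐 A j).comap ((1 : Matrix (Fin n) (Fin n) F) ⊗ₖ C).mulVecLin := by
    rw [Kseq]
    refine Submodule.span_le.mpr ?_
    rintro y ⟨C', w, hw, rfl⟩
    simp only [SetLike.mem_coe, Submodule.mem_comap, mulVecLin_apply]
    rw [Matrix.mulVec_mulVec, ← mul_kronecker_mul, Matrix.one_mul]
    exact Submodule.subset_span ⟨C * C', w, hw, rfl⟩
  simpa using key hv

lemma ker_le_Kseq_zero : LinearMap.ker A.mulVecLin ≤ Kseq 𝓐 A 0 := by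
  intro v hv
  have h1 : A.mulVec v ∈ wongSeq 𝓐 A 0 := by
    simp only [LinearMap.mem_ker, mulVecLin_apply] at hv
    rw [hv]
    exact Submodule.zero_mem _
  have : v = ((1 : Matrix (Fin n) (Fin n) F) ⊗ₖ (1 : Matrix (Fin d) (Fin d) F)).mulVec v := by
    rw [Matrix.one_kronecker_one, Matrix.one_mulVec]
  rw [this]
  exact Submodule.subset_span ⟨1, v, h1, rfl⟩

end blowup

section divisibility

variable {n d : ℕ}

/-- slice at `a` -/
def slice (a : Fin d) : ((Fin n × Fin d) → F) →ₗ[F] (Fin n → F) :=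
  LinearMap.funLeft F F (fun i => (i, a))

@[simp] lemma slice_apply (a : Fin d) (v : (Fin n × Fin d) → F) (i : Fin n) :
    slice a v i = v (i, a) := rfl

/-- embed at `a` -/
def embed (a : Fin d) : (Fin n → F) →ₗ[F] ((Fin n × Fin d) → F) where
  toFun u := fun p => if p.2 = a then u p.1 else 0
  map_add' u v := by funext p; by_cases h : p.2 = a <;> simp [h]
  map_smul' c u := by funext p; by_cases h : p.2 = a <;> simp [h]

@[simp] lemma embed_apply (a : Fin d) (u : Fin n → F) (p : Fin n × Fin d) :
    embed a u p = if p.2 = a then u p.1 else 0 := rfl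

lemma kron_std_mulVec (a b : Fin d) (v : (Fin n × Fin d) → F) :
    ((1 : Matrix (Fin n) (Fin n) F) ⊗ₖ Matrix.single a b (1 : F)).mulVec v
      = embed a (slice b v) := by
  funext p
  obtain ⟨i, k⟩ := p
  simp only [mulVec, dotProduct, Fintype.sum_prod_type, kroneckerMap_apply, one_apply,
    Matrix.single, of_apply, embed_apply, slice_apply, ite_mul, one_mul, zero_mul,
    mul_ite, mul_one, mul_zero]
  rw [Finset.sum_eq_single i]
  · simp only [if_pos rfl]
    by_cases hk : k = a
    · subst hk
      simp only [true_and, if_pos rfl]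
      rw [Finset.sum_eq_single b]
      · simp
      · intro l _ hl; rw [if_neg (by simp [Ne.symm hl])]
      · simp
    · rw [Finset.sum_eq_zero, if_neg hk]
      intro l _
      rw [if_neg (by intro h; exact hk h.1.symm)]
  · intro j _ hj
    rw [Finset.sum_eq_zero]
    intro l _
    rw [if_neg (show ¬ i = j from fun h => hj h.symm)]
    simp
  · simp

lemma slice_embed (a b : Fin d) (u : Fin n → F) :
    slice b (embed a u) = if b = a then u else 0 := by
  by_cases h : b = a <;> funext i <;> simp [h]

lemma sum_embed_slice (v : (Fin n × Fin d) → F) :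
    ∑ a : Fin d, embed a (slice a v) = v := by
  funext p
  obtain ⟨i, k⟩ := p
  simp only [Finset.sum_apply, embed_apply, slice_apply]
  rw [Finset.sum_eq_single k]
  · simp
  · intro b _ hb
    exact if_neg (fun h => hb h.symm)
  · simp

lemma dvd_finrank_of_invariant (hd : 0 < d) (K : Submodule F ((Fin n × Fin d) → F))
    (hK : ∀ (C : Matrix (Fin d) (Fin d) F), ∀ v ∈ K,
      ((1 : Matrix (Fin n) (Fin n) F) ⊗ₖ C).mulVec v ∈ K) :
    d ∣ Module.finrank F K := by
  have z : Fin d := ⟨0, hd⟩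
  set V : Submodule F (Fin n → F) := K.map (slice z) with hV
  -- slices of elements of K are in V
  have hsl : ∀ (a : Fin d), ∀ k ∈ K, slice a k ∈ V := by
    intro a k hk
    refine ⟨((1 : Matrix (Fin n) (Fin n) F) ⊗ₖ Matrix.single z a (1 : F)).mulVec k,
      hK _ _ hk, ?_⟩
    rw [kron_std_mulVec, slice_embed, if_pos rfl]
  -- embeddings of elements of V are in K
  have hemb : ∀ (a : Fin d), ∀ u ∈ V, embed a u ∈ K := by
    rintro a u ⟨w, hw, rfl⟩
    have : embed a (slice z w)
        = ((1 : Matrix (Fin n) (Fin n) F) ⊗ₖ Matrix.single a z (1 : F)).mulVec w := by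
      rw [kron_std_mulVec]
    rw [this]
    exact hK _ _ hw
  -- the equivalence K ≃ (Fin d → V)
  let toF : K →ₗ[F] (Fin d → V) :=
    LinearMap.pi (fun a => LinearMap.codRestrict V ((slice a).comp K.subtype)
      (fun k => hsl a k.1 k.2))
  let invF : (Fin d → V) →ₗ[F] K :=
    LinearMap.codRestrict K
      (∑ a : Fin d, (embed a).comp (V.subtype.comp (LinearMap.proj a)))
      (by
        intro g
        rw [LinearMap.sum_apply]
        exact Submodule.sum_mem _ (fun a _ => hemb a (g a).1 (g a).2))
  have left_inv : ∀ k : K, invF (toF k) = k := by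
    intro k
    apply Subtype.ext
    show (∑ a : Fin d, (embed a).comp (V.subtype.comp (LinearMap.proj a))) (toF k) = k.1
    rw [LinearMap.sum_apply]
    simp only [LinearMap.comp_apply, LinearMap.proj_apply, Submodule.coe_subtype]
    show ∑ a : Fin d, embed a (slice a k.1) = k.1
    exact sum_embed_slice k.1
  have right_inv : ∀ g : Fin d → V, toF (invF g) = g := by
    intro g
    funext a
    apply Subtype.ext
    show slice a ((invF g : (Fin n × Fin d) → F)) = (g a).1
    have hval : (invF g : (Fin n × Fin d) → F) = ∑ b : Fin d, embed b ((g b).1) := by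
      show (∑ b : Fin d, (embed b).comp (V.subtype.comp (LinearMap.proj b))) g
        = ∑ b : Fin d, embed b ((g b).1)
      rw [LinearMap.sum_apply]
      rfl
    rw [hval]
    funext i
    rw [map_sum]
    simp only [Finset.sum_apply, slice_apply, embed_apply]
    rw [Finset.sum_eq_single a]
    · simp
    · intro b _ hb
      exact if_neg (fun h => hb h.symm)
    · simp
  let e : K ≃ₗ[F] (Fin d → V) :=
    LinearEquiv.ofLinear toF invF (LinearMap.ext right_inv) (LinearMap.ext left_inv)
  have h1 : Module.finrank F K = Module.finrank F (Fin d → V) := e.finrank_eq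
  rw [h1, Module.finrank_pi_fintype]
  simp only [Finset.sum_const, Finset.card_univ, Fintype.card_fin, smul_eq_mul]
  exact Dvd.intro _ rfl

end divisibility

end WongAux

/-- For a blow-up `𝓐 = 𝓑 ⊗ M(d,F)` and `A ∈ 𝓐` of rank `rd`, the second Wong
sequence of `(A, 𝓐)` stabilizes within `r + 1` steps. -/
theorem stmt17 {F : Type*} [Field F] {n d r : ℕ} (hd : 0 < d)
    (𝓑 : Submodule F (Matrix (Fin n) (Fin n) F))
    (𝓐 : Submodule F (Matrix (Fin n × Fin d) (Fin n × Fin d) F))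
    (h𝓐 : 𝓐 = Submodule.span F
      {M : Matrix (Fin n × Fin d) (Fin n × Fin d) F |
        ∃ B ∈ 𝓑, ∃ C : Matrix (Fin d) (Fin d) F, M = B ⊗ₖ C})
    (A : Matrix (Fin n × Fin d) (Fin n × Fin d) F) (hA : A ∈ 𝓐)
    (hrk : A.rank = r * d) :
    ∀ j : ℕ, r + 1 ≤ j → wongSeq 𝓐 A j = wongSeq 𝓐 A (r + 1) := by
  classical
  have key : wongSeq 𝓐 A (r + 1) = wongSeq 𝓐 A (r + 1 + 1) := by
    by_contra hne
    have hWne : ∀ i, i ≤ r + 1 → wongSeq 𝓐 A i ≠ wongSeq 𝓐 A (i + 1) := by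
      intro i hi he
      apply hne
      have hstab := WongAux.wongSeq_stab 𝓐 A he
      have h1 := hstab (r + 1 - i)
      have h2 := hstab (r + 1 + 1 - i)
      rw [show i + (r + 1 - i) = r + 1 by omega] at h1
      rw [show i + (r + 1 + 1 - i) = r + 1 + 1 by omega] at h2
      rw [h1, h2]
    have hKlt : ∀ i, i ≤ r → WongAux.Kseq 𝓐 A i < WongAux.Kseq 𝓐 A (i + 1) := by
      intro i hi
      refine lt_of_le_of_ne (WongAux.Kseq_mono 𝓐 A i) (fun he => hWne (i + 1) (by omega) ?_)
      rw [WongAux.wongSeq_succ_eq_appSp A h𝓐, WongAux.wongSeq_succ_eq_appSp A h𝓐, he]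
    have hdvd : ∀ i, d ∣ Module.finrank F (WongAux.Kseq 𝓐 A i) := fun i =>
      WongAux.dvd_finrank_of_invariant hd _ (fun C v hv => WongAux.Kseq_invariant 𝓐 A i C v hv)
    have hstep : ∀ i, i ≤ r → Module.finrank F (WongAux.Kseq 𝓐 A i) + d ≤
        Module.finrank F (WongAux.Kseq 𝓐 A (i + 1)) := by
      intro i hi
      have hlt := Submodule.finrank_lt_finrank_of_lt (hKlt i hi)
      obtain ⟨a, ha⟩ := hdvd i
      obtain ⟨b, hb⟩ := hdvd (i + 1)
      rw [ha, hb] at hlt ⊢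
      have hab : a < b := Nat.lt_of_mul_lt_mul_left hlt
      have h2 : d * (a + 1) ≤ d * b := Nat.mul_le_mul_left d hab
      rw [Nat.mul_succ] at h2
      exact h2
    have hgrow : ∀ i, i ≤ r + 1 → Module.finrank F (WongAux.Kseq 𝓐 A 0) + i * d ≤
        Module.finrank F (WongAux.Kseq 𝓐 A i) := by
      intro i
      induction i with
      | zero => simp
      | succ i ih =>
          intro hi
          have h1 := ih (by omega)
          have h2 := hstep i (by omega)
          rw [Nat.succ_mul]
          omega
    have hker : Module.finrank F (LinearMap.ker A.mulVecLin) ≤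
        Module.finrank F (WongAux.Kseq 𝓐 A 0) :=
      Submodule.finrank_mono (WongAux.ker_le_Kseq_zero 𝓐 A)
    have hrn : A.rank + Module.finrank F (LinearMap.ker A.mulVecLin) = n * d := by
      rw [Matrix.rank, LinearMap.finrank_range_add_finrank_ker A.mulVecLin, Module.finrank_pi,
        Fintype.card_prod, Fintype.card_fin, Fintype.card_fin]
    have htop : Module.finrank F (WongAux.Kseq 𝓐 A (r + 1)) ≤ n * d := by
      have h3 := Submodule.finrank_le (WongAux.Kseq 𝓐 A (r + 1))
      rwa [Module.finrank_pi, Fintype.card_prod, Fintype.card_fin, Fintype.card_fin] at h3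
    have hfin := hgrow (r + 1) le_rfl
    rw [hrk] at hrn
    have hx : (r + 1) * d = r * d + d := by ring
    omega
  intro j hj
  obtain ⟨k, rfl⟩ : ∃ k, j = (r + 1) + k := ⟨j - (r + 1), by omega⟩
  exact WongAux.wongSeq_stab 𝓐 A key k
end
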